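/- Lemma 3.6(ii) (degenerate sufficient decrease with convex g): Let g : H → ℝ, let x, x⁺ ∈ H, and let u ∈ H be a subgradient of g at x⁺ in the sense that g(z) ≥ g(x⁺) + ⟪u, z − x⁺⟫ for all z ∈ H, such that 0 = ∇f(x) + u + Q(x⁺ − x). Then, writing h := f + g, one has 2ν · (h(x) − h(x⁺)) ≥ (2ν − β) · ⟪Q(x⁺ − x), x⁺ − x⟫; i.e. h(x) − h(x⁺) ≥ (1 − β/(2ν)) ‖x⁺ − x‖_Q². -/

import Mathlib

set_option maxHeartbeats 1000000


open RealInnerProductSpace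

/-- Cauchy–Schwarz for a positive semidefinite self-adjoint operator. -/
lemma psd_cauchy_schwarz
    {H : Type*} [NormedAddCommGroup H] [InnerProductSpace ℝ H]
    (Q : H →L[ℝ] H)
    (hQsym : ∀ x y : H, ⟪Q x, y⟫ = ⟪x, Q y⟫)
    (hQpos : ∀ x : H, 0 ≤ ⟪Q x, x⟫) (a b : H) :
    ⟪Q a, b⟫ ^ 2 ≤ ⟪Q a, a⟫ * ⟪Q b, b⟫ := by
  have h : ∀ r : ℝ, 0 ≤ ⟪Q b, b⟫ * (r * r) + (2 * ⟪Q a, b⟫) * r + ⟪Q a, a⟫ := by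
    intro r
    have h0 := hQpos (a + r • b)
    have hQab : ⟪Q b, a⟫ = ⟪Q a, b⟫ := by
      rw [hQsym b a, real_inner_comm]
    have hexp : ⟪Q (a + r • b), a + r • b⟫
        = ⟪Q b, b⟫ * (r * r) + (2 * ⟪Q a, b⟫) * r + ⟪Q a, a⟫ := by
      rw [map_add, map_smul]
      simp [inner_add_left, inner_add_right, inner_smul_left, inner_smul_right, hQab]
      ring
    linarith [hexp ▸ h0]
  have hd := discrim_le_zero h
  rw [discrim] at hd
  nlinarith [hd]

/-- Lemma 3.6(ii): degenerate sufficient decrease property, with convex `g`. -/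
theorem stmt_17
    {H : Type*} [NormedAddCommGroup H] [InnerProductSpace ℝ H] [CompleteSpace H]
    (Q : H →L[ℝ] H)
    (hQsym : ∀ x y : H, ⟪Q x, y⟫ = ⟪x, Q y⟫)
    (hQpos : ∀ x : H, 0 ≤ ⟪Q x, x⟫)
    (ν : ℝ) (hν : 0 < ν)
    (hνQ : ∀ w ∈ (LinearMap.ker (Q : H →ₗ[ℝ] H))ᗮ, ν * ‖w‖ ≤ ‖Q w‖)
    (β : ℝ) (hβ : 0 ≤ β)
    (f : H → ℝ) (f' : H → H)
    (hf : ∀ x : H, HasGradientAt f (f' x) x)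
    (hranf' : Set.range f' ⊆ Set.range Q)
    (hcoco : ∀ x y : H, ‖f' x - f' y‖ ^ 2 ≤ β * ⟪f' x - f' y, x - y⟫)
    (g : H → ℝ) (x xp u : H)
    (hsub : ∀ z : H, g xp + ⟪u, z - xp⟫ ≤ g z)
    (hopt : 0 = f' x + u + Q (xp - x)) :
    (2 * ν - β) * ⟪Q (xp - x), xp - x⟫ ≤
      2 * ν * ((f x + g x) - (f xp + g xp)) := by
  set w : H := xp - x with hw
  set C : ℝ := ⟪Q w, w⟫ with hCdef
  have hC : 0 ≤ C := hQpos w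
  -- Key estimate: for t > 0, ⟪f'(x+t•w) - f' x, w⟫ ≤ β*t/ν * C
  have key : ∀ t : ℝ, 0 < t → ⟪f' (x + t • w) - f' x, w⟫ ≤ β * t / ν * C := by
    intro t ht
    set d : H := f' (x + t • w) - f' x with hd
    -- d lies in the range of Q
    obtain ⟨a₁, ha₁⟩ := hranf' ⟨x + t • w, rfl⟩
    obtain ⟨a₂, ha₂⟩ := hranf' ⟨x, rfl⟩
    have hda : Q (a₁ - a₂) = d := by rw [map_sub, ha₁, ha₂]
    haveI : CompleteSpace (LinearMap.ker (Q : H →ₗ[ℝ] H)) :=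
      (ContinuousLinearMap.isClosed_ker Q).completeSpace_coe
    obtain ⟨k, hk, e, he, hae⟩ :=
      (LinearMap.ker (Q : H →ₗ[ℝ] H) : Submodule ℝ H).exists_add_mem_mem_orthogonal (a₁ - a₂)
    have hQe : Q e = d := by
      have hQk : Q k = 0 := hk
      rw [← hda, hae, map_add, hQk, zero_add]
    set s : ℝ := ⟪d, w⟫ with hs
    -- cocoercivity
    have hcc : ‖d‖ ^ 2 ≤ β * t * s := by
      have h1 := hcoco (x + t • w) x
      have h2 : (x + t • w) - x = t • w := by abel
      rw [h2, real_inner_smul_right] at h1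
      rw [hd]; linarith
    -- norm of e
    have hne : ν * ‖e‖ ≤ ‖d‖ := by
      have := hνQ e he
      rwa [hQe] at this
    -- Cauchy–Schwarz for Q-form
    have hcs : s ^ 2 ≤ ⟪d, e⟫ * C := by
      have h := psd_cauchy_schwarz Q hQsym hQpos e w
      rw [hQe] at h
      exact h
    have hQee : ⟪d, e⟫ ≤ ‖d‖ * ‖e‖ := real_inner_le_norm d e
    have hQee0 : 0 ≤ ⟪d, e⟫ := by rw [← hQe]; exact hQpos e
    have hne0 : 0 ≤ ‖e‖ := norm_nonneg e
    have hnd0 : 0 ≤ ‖d‖ := norm_nonneg d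
    -- ν * ⟪Q e, e⟫ ≤ ‖d‖^2 ≤ β t s
    have h3 : ν * ⟪d, e⟫ ≤ β * t * s := by
      nlinarith
    -- so ν s^2 ≤ β t s C
    have h4 : ν * s ^ 2 ≤ β * t * s * C := by
      nlinarith
    -- conclude
    rcases le_or_gt s 0 with hs0 | hs0
    · have : 0 ≤ β * t / ν * C := by positivity
      linarith
    · have h5 : ν * s ≤ β * t * C := by nlinarith
      rw [div_mul_eq_mul_div, le_div_iff₀ hν] at *
      nlinarith
  -- derivative of t ↦ f (x + t • w)
  have hderiv : ∀ t : ℝ, HasDerivAt (fun t : ℝ => f (x + t • w)) ⟪f' (x + t • w), w⟫ t := by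
    intro t
    have hγ : HasDerivAt (fun t : ℝ => x + t • w) w t := by
      simpa using ((hasDerivAt_id t).smul_const w).const_add x
    have := ((hf (x + t • w)).hasFDerivAt).comp_hasDerivAt t hγ
    exact this
  set ψ : ℝ → ℝ := fun t => f (x + t • w) - t * ⟪f' x, w⟫ - β * C / (2 * ν) * t ^ 2 with hψdef
  have hψ : ∀ t : ℝ, HasDerivAt ψ
      (⟪f' (x + t • w), w⟫ - ⟪f' x, w⟫ - β * C / ν * t) t := by
    intro t
    have h1 : HasDerivAt (fun t : ℝ => t * ⟪f' x, w⟫) ⟪f' x, w⟫ t := by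
      simpa using (hasDerivAt_id t).mul_const ⟪f' x, w⟫
    have h2 := (hasDerivAt_pow 2 t).const_mul (β * C / (2 * ν))
    have hval : ⟪f' (x + t • w), w⟫ - ⟪f' x, w⟫ - β * C / ν * t
        = ⟪f' (x + t • w), w⟫ - ⟪f' x, w⟫ - β * C / (2 * ν) * (↑2 * t ^ (2 - 1)) := by
      push_cast
      field_simp
    rw [hval]
    exact ((hderiv t).sub h1).sub h2
  have hanti : AntitoneOn ψ (Set.Icc 0 1) := by
    apply antitoneOn_of_deriv_nonpos (convex_Icc 0 1)
    · exact fun t _ => ((hψ t).continuousAt).continuousWithinAt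
    · intro t ht
      exact ((hψ t).differentiableAt).differentiableWithinAt
    · intro t ht
      rw [interior_Icc] at ht
      rw [(hψ t).deriv]
      have h1 : ⟪f' (x + t • w) - f' x, w⟫ ≤ β * t / ν * C := key t ht.1
      rw [inner_sub_left] at h1
      have : β * t / ν * C = β * C / ν * t := by ring
      linarith [this ▸ h1]
  have hψ10 : ψ 1 ≤ ψ 0 := hanti (by norm_num) (by norm_num) (by norm_num)
  have hx1 : x + (1 : ℝ) • w = xp := by rw [one_smul, hw]; abel
  have hx0 : x + (0 : ℝ) • w = x := by rw [zero_smul, add_zero]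
  have hfdec : f xp - ⟪f' x, w⟫ - β * C / (2 * ν) ≤ f x := by
    have := hψ10
    simp only [hψdef, hx1, hx0] at this
    norm_num at this
    linarith
  -- g part
  have hu : u = -f' x - Q w := by
    have h : f' x + u + Q w = 0 := hopt.symm
    linear_combination (norm := module) h
  have hgdec : g xp + ⟪f' x, w⟫ + C ≤ g x := by
    have h1 := hsub x
    have h2 : x - xp = -w := by rw [hw]; abel
    rw [h2, hu] at h1
    rw [inner_neg_right, inner_sub_left, inner_neg_left] at h1
    rw [hCdef]
    linarith
  -- combine
  have hstep : C - β * C / (2 * ν) ≤ (f x + g x) - (f xp + g xp) := by linarith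
  calc (2 * ν - β) * C = 2 * ν * (C - β * C / (2 * ν)) := by field_simp
    _ ≤ 2 * ν * ((f x + g x) - (f xp + g xp)) :=
        mul_le_mul_of_nonneg_left hstep (by positivity)
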